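/- For every real k > 0 and every function v in H^1((0,π); sinθ dθ), one has ∫₀^π (|v'(θ)|² + (k²/sin²θ) v(θ)²) sinθ dθ ≥ (k² + k) ∫₀^π v(θ)² sinθ dθ, with equality if and only if v(θ) = C sin^k(θ) for some constant C. -/

import Mathlib

open Real MeasureTheory Set Filter Topology

lemma ftc_Ioo {F f : ℝ → ℝ} {a b : ℝ} (hab : a < b)
    (hF : ∀ x ∈ Ioo a b, HasDerivAt F (f x) x) (hf : IntegrableOn f (Ioo a b)) :
    ∃ La Lb : ℝ, Tendsto F (𝓝[>] a) (𝓝 La) ∧ Tendsto F (𝓝[<] b) (𝓝 Lb) ∧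
      ∫ x in Ioo a b, f x = Lb - La := by
  set g : ℝ → ℝ := (Ioo a b).indicator f with hg
  have hgi : Integrable g := by
    rwa [hg, integrable_indicator_iff measurableSet_Ioo]
  set P : ℝ → ℝ := fun x => ∫ t in Set.Ioc a x, g t with hP
  have hPc : ContinuousOn P (Icc a b) :=
    intervalIntegral.continuousOn_primitive (hgi.integrableOn)
  -- P y - P x = ∫ x..y f  for x y ∈ Ioo a b
  have key : ∀ x ∈ Ioo a b, ∀ y ∈ Ioo a b, F y - F x = P y - P x := by
    intro x hx y hy
    have hsub : uIcc x y ⊆ Ioo a b := Set.OrdConnected.uIcc_subset Set.ordConnected_Ioo hx hy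
    have h1 : ∫ t in x..y, f t = F y - F x := by
      apply intervalIntegral.integral_eq_sub_of_hasDerivAt
      · intro t ht; exact hF t (hsub ht)
      · exact (hgi.intervalIntegrable).congr <| by
          intro t ht
          exact Set.indicator_of_mem ((uIoc_subset_uIcc.trans hsub) ht) f
    have h2 : ∫ t in x..y, f t = ∫ t in x..y, g t := by
      apply intervalIntegral.integral_congr
      intro t ht
      exact (Set.indicator_of_mem (hsub ht) f).symm
    have h3 : (∫ t in a..x, g t) + ∫ t in x..y, g t = ∫ t in a..y, g t :=
      intervalIntegral.integral_add_adjacent_intervals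
        hgi.intervalIntegrable hgi.intervalIntegrable
    have h4 : ∀ z ∈ Ioo a b, P z = ∫ t in a..z, g t := by
      intro z hz
      rw [hP, intervalIntegral.integral_of_le hz.1.le]
    rw [← h1, h2, h4 x hx, h4 y hy, ← h3]; ring
  set c := (a + b) / 2 with hc
  have hcm : c ∈ Ioo a b := ⟨by simp [hc]; linarith, by simp [hc]; linarith⟩
  have hFP : ∀ x ∈ Ioo a b, F x = F c - P c + P x := by
    intro x hx
    have := key c hcm x hx
    linarith
  have hPa : Tendsto P (𝓝[>] a) (𝓝 (P a)) := by
    have := (hPc a (left_mem_Icc.2 hab.le)).mono Ioo_subset_Icc_self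
    exact this.tendsto.mono_left
      (nhdsWithin_le_iff.2 (Ioo_mem_nhdsGT hab))
  have hPb : Tendsto P (𝓝[<] b) (𝓝 (P b)) := by
    have := (hPc b (right_mem_Icc.2 hab.le)).mono Ioo_subset_Icc_self
    exact this.tendsto.mono_left
      (nhdsWithin_le_iff.2 (Ioo_mem_nhdsLT hab))
  refine ⟨F c - P c + P a, F c - P c + P b, ?_, ?_, ?_⟩
  · refine Tendsto.congr' ?_ (hPa.const_add (F c - P c))
    filter_upwards [Ioo_mem_nhdsGT hab] with x hx
    exact (hFP x hx).symm
  · refine Tendsto.congr' ?_ (hPb.const_add (F c - P c))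
    filter_upwards [Ioo_mem_nhdsLT hab] with x hx
    exact (hFP x hx).symm
  · have hPa0 : P a = 0 := by simp [hP]
    have : P b = ∫ x in Ioo a b, f x := by
      have : P b = ∫ t in Set.Ioc a b, g t := rfl
      rw [this, MeasureTheory.integral_Ioc_eq_integral_Ioo]
      exact setIntegral_congr_fun measurableSet_Ioo fun t ht => Set.indicator_of_mem ht f
    rw [hPa0, ← this]; ring

lemma not_integrableOn_inv_Ioo {δ : ℝ} (hδ : 0 < δ) :
    ¬ IntegrableOn (fun θ : ℝ => θ⁻¹) (Ioo 0 δ) := by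
  intro h
  have : IntegrableOn (fun θ : ℝ => θ ^ (-1 : ℝ)) (Ioo 0 δ) := by
    apply h.congr_fun (fun θ hθ => ?_) measurableSet_Ioo
    rw [rpow_neg_one]
  rw [intervalIntegral.integrableOn_Ioo_rpow_iff hδ] at this
  linarith

lemma aux_left {u : ℝ → ℝ} {L : ℝ}
    (hu : IntegrableOn (fun θ => u θ / Real.sin θ) (Ioo 0 π))
    (hL : Tendsto u (𝓝[>] (0:ℝ)) (𝓝 L)) : L = 0 := by
  by_contra hne
  have hpos : (0:ℝ) < |L| := abs_pos.2 hne
  have hev : ∀ᶠ θ in 𝓝[>] (0:ℝ), |L|/2 ≤ |u θ| :=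
    (hL.abs).eventually (eventually_ge_nhds (by linarith : |L|/2 < |L|))
  obtain ⟨d, hd, hsub⟩ := mem_nhdsGT_iff_exists_Ioo_subset.1 hev
  set δ := min d π with hδdef
  have hδ : 0 < δ := lt_min hd Real.pi_pos
  have hIoo : Ioo (0:ℝ) δ ⊆ Ioo 0 π := Ioo_subset_Ioo le_rfl (min_le_right _ _)
  have hbig : IntegrableOn (fun θ => |L|/2 * θ⁻¹) (Ioo 0 δ) := by
    refine Integrable.mono' ((hu.mono_set hIoo).abs) ?_ ?_
    · exact ((measurable_const.mul measurable_inv)).aestronglyMeasurable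
    · filter_upwards [ae_restrict_mem measurableSet_Ioo] with θ hθ
      have hθ0 : 0 < θ := hθ.1
      have hθπ : θ < π := lt_of_lt_of_le hθ.2 (min_le_right _ _)
      have hs : 0 < Real.sin θ := Real.sin_pos_of_pos_of_lt_pi hθ0 hθπ
      have h1 : |L|/2 ≤ |u θ| := hsub ⟨hθ0, lt_of_lt_of_le hθ.2 (min_le_left _ _)⟩
      have h2 : Real.sin θ ≤ θ := Real.sin_le hθ0.le
      have : |L|/2 * θ⁻¹ ≤ |u θ| / Real.sin θ :=
        calc |L|/2 * θ⁻¹ ≤ |u θ| * θ⁻¹ := by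
              apply mul_le_mul_of_nonneg_right h1 (by positivity)
          _ ≤ |u θ| / Real.sin θ := by
              rw [div_eq_mul_inv]
              exact mul_le_mul_of_nonneg_left (by
                apply inv_anti₀ hs h2) (abs_nonneg _)
      rw [Real.norm_eq_abs, abs_of_nonneg (by positivity), abs_div, abs_of_pos hs]
      exact this
  have : IntegrableOn (fun θ : ℝ => θ⁻¹) (Ioo 0 δ) := by
    have h2 : IntegrableOn (fun θ : ℝ => (2/|L|) * (|L|/2 * θ⁻¹)) (Ioo 0 δ) := hbig.const_mul (2/|L|)
    apply h2.congr_fun (fun θ hθ => ?_) measurableSet_Ioo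
    have hθ0 : θ ≠ 0 := ne_of_gt hθ.1
    field_simp
  exact not_integrableOn_inv_Ioo hδ this

lemma aux_right {u : ℝ → ℝ} {L : ℝ}
    (hu : IntegrableOn (fun θ => u θ / Real.sin θ) (Ioo 0 π))
    (hL : Tendsto u (𝓝[<] π) (𝓝 L)) : L = 0 := by
  have hu' : IntegrableOn (fun θ => u (π - θ) / Real.sin θ) (Ioo 0 π) := by
    have h1 : IntervalIntegrable (fun θ => u θ / Real.sin θ) volume 0 π := by
      rwa [intervalIntegrable_iff_integrableOn_Ioo_of_le Real.pi_pos.le]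
    have h2 := h1.comp_sub_left π
    rw [sub_zero, sub_self] at h2
    have h3 : IntervalIntegrable (fun θ => u (π - θ) / Real.sin θ) volume 0 π := by
      apply (h2.symm).congr
      intro θ _
      simp [Real.sin_pi_sub]
    rwa [intervalIntegrable_iff_integrableOn_Ioo_of_le Real.pi_pos.le] at h3
  have hL' : Tendsto (fun θ => u (π - θ)) (𝓝[>] (0:ℝ)) (𝓝 L) := by
    apply hL.comp
    have hc : Tendsto (fun θ : ℝ => π - θ) (𝓝[>] (0:ℝ)) (𝓝 π) :=
      ((continuous_const.sub continuous_id).tendsto' 0 π (by simp)).mono_left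
        nhdsWithin_le_nhds
    apply tendsto_nhdsWithin_of_tendsto_nhds_of_eventually_within _ hc
    filter_upwards [self_mem_nhdsWithin] with θ (hθ : 0 < θ)
    simpa using hθ
  exact aux_left hu' hL'


lemma young_ineq {a b s : ℝ} (hs : 0 < s) : 2*a*b ≤ a^2/s + b^2*s := by
  rw [div_add' _ _ _ hs.ne', le_div_iff₀ hs]
  nlinarith [sq_nonneg (a - b*s)]

theorem stmt0 (k : ℝ) (hk : 0 < k) (v v' : ℝ → ℝ)
    (hderiv : ∀ θ ∈ Ioo (0:ℝ) π, HasDerivAt v (v' θ) θ)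
    (hH1 : IntegrableOn (fun θ => ((v θ)^2 + (v' θ)^2) * Real.sin θ) (Ioo 0 π))
    (hint : IntegrableOn
      (fun θ => ((v' θ)^2 + (k^2 / (Real.sin θ)^2) * (v θ)^2) * Real.sin θ) (Ioo 0 π)) :
    (k^2 + k) * ∫ θ in Ioo (0:ℝ) π, (v θ)^2 * Real.sin θ ≤
      (∫ θ in Ioo (0:ℝ) π, ((v' θ)^2 + (k^2 / (Real.sin θ)^2) * (v θ)^2) * Real.sin θ) ∧
    ((k^2 + k) * ∫ θ in Ioo (0:ℝ) π, (v θ)^2 * Real.sin θ =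
      (∫ θ in Ioo (0:ℝ) π, ((v' θ)^2 + (k^2 / (Real.sin θ)^2) * (v θ)^2) * Real.sin θ) ↔
      ∃ C : ℝ, ∀ θ ∈ Ioo (0:ℝ) π, v θ = C * (Real.sin θ) ^ k) := by
  have hπ := Real.pi_pos
  -- measurability
  have hvc : ContinuousOn v (Ioo 0 π) := fun θ hθ =>
    ((hderiv θ hθ).continuousAt).continuousWithinAt
  have hmv : AEStronglyMeasurable v (volume.restrict (Ioo 0 π)) :=
    hvc.aestronglyMeasurable measurableSet_Ioo
  have hmv' : AEStronglyMeasurable v' (volume.restrict (Ioo 0 π)) := by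
    refine (measurable_deriv v).aestronglyMeasurable.congr ?_
    filter_upwards [ae_restrict_mem measurableSet_Ioo] with θ hθ
    exact (hderiv θ hθ).deriv
  have hmsin : AEStronglyMeasurable Real.sin (volume.restrict (Ioo 0 π)) :=
    Real.continuous_sin.aestronglyMeasurable.restrict
  -- basic integrabilities
  have hsin_pos : ∀ θ ∈ Ioo (0:ℝ) π, 0 < Real.sin θ := fun θ hθ =>
    Real.sin_pos_of_pos_of_lt_pi hθ.1 hθ.2
  have hmv2s : AEStronglyMeasurable (fun θ => (v θ)^2 * Real.sin θ)
      (volume.restrict (Ioo 0 π)) := by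
    refine ((hmv.mul hmv).mul hmsin).congr ?_
    filter_upwards [] with θ; simp [pow_two]
  have hmv'2s : AEStronglyMeasurable (fun θ => (v' θ)^2 * Real.sin θ)
      (volume.restrict (Ioo 0 π)) := by
    refine ((hmv'.mul hmv').mul hmsin).congr ?_
    filter_upwards [] with θ; simp [pow_two]
  have hmvdiv : AEStronglyMeasurable (fun θ => (v θ)^2 / Real.sin θ)
      (volume.restrict (Ioo 0 π)) := by
    refine ((hmv.mul hmv).mul ((Real.measurable_sin.inv).aestronglyMeasurable.restrict)).congr ?_
    filter_upwards [] with θ; simp [pow_two, div_eq_mul_inv]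
  have hv2s : IntegrableOn (fun θ => (v θ)^2 * Real.sin θ) (Ioo 0 π) := by
    refine Integrable.mono' hH1 hmv2s ?_
    filter_upwards [ae_restrict_mem measurableSet_Ioo] with θ hθ
    have hs := (hsin_pos θ hθ).le
    rw [Real.norm_eq_abs, abs_of_nonneg (by positivity)]
    nlinarith [sq_nonneg (v' θ)]
  have hv'2s : IntegrableOn (fun θ => (v' θ)^2 * Real.sin θ) (Ioo 0 π) := by
    refine Integrable.mono' hH1 hmv'2s ?_
    filter_upwards [ae_restrict_mem measurableSet_Ioo] with θ hθ
    have hs := (hsin_pos θ hθ).le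
    rw [Real.norm_eq_abs, abs_of_nonneg (by positivity)]
    nlinarith [sq_nonneg (v θ)]
  have hvdiv : IntegrableOn (fun θ => (v θ)^2 / Real.sin θ) (Ioo 0 π) := by
    refine Integrable.mono' (hint.const_mul (1/k^2)) hmvdiv ?_
    filter_upwards [ae_restrict_mem measurableSet_Ioo] with θ hθ
    have hs := hsin_pos θ hθ
    rw [Real.norm_eq_abs, abs_of_nonneg (by positivity)]
    have key : (1/k^2) * (((v' θ)^2 + k^2/(Real.sin θ)^2 * (v θ)^2) * Real.sin θ)
        = (1/k^2)*((v' θ)^2*Real.sin θ) + (v θ)^2/Real.sin θ := by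
      field_simp
    rw [key]
    have : 0 ≤ (1/k^2)*((v' θ)^2*Real.sin θ) := by positivity
    linarith
  -- the auxiliary functions
  set G : ℝ → ℝ := fun θ =>
    (v' θ - k * (Real.cos θ / Real.sin θ) * v θ)^2 * Real.sin θ with hGdef
  set H : ℝ → ℝ := fun θ => k * ((v θ)^2 * Real.cos θ) with hHdef
  set H' : ℝ → ℝ := fun θ =>
    k * (2 * v θ * v' θ * Real.cos θ - (v θ)^2 * Real.sin θ) with hH'def
  have hHd : ∀ θ ∈ Ioo (0:ℝ) π, HasDerivAt H (H' θ) θ := by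
    intro θ hθ
    have h1 := (((hderiv θ hθ).pow 2).mul (Real.hasDerivAt_cos θ)).const_mul k
    apply h1.congr_deriv
    simp only [hH'def, Pi.pow_apply]
    push_cast
    ring
  have hH'i : IntegrableOn H' (Ioo 0 π) := by
    have hmH' : AEStronglyMeasurable H' (volume.restrict (Ioo 0 π)) := by
      apply AEStronglyMeasurable.const_mul
      apply AEStronglyMeasurable.sub
      · exact ((((aestronglyMeasurable_const.mul hmv).mul hmv').mul
          (Real.continuous_cos.aestronglyMeasurable.restrict)))
      · exact hmv2s
    refine Integrable.mono'
      (((hvdiv.add hv'2s).add hv2s).const_mul k) hmH' ?_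
    filter_upwards [ae_restrict_mem measurableSet_Ioo] with θ hθ
    have hs := hsin_pos θ hθ
    have hy := young_ineq (a := |v θ|) (b := |v' θ|) hs
    have hc : |Real.cos θ| ≤ 1 := Real.abs_cos_le_one θ
    have habs : |v θ|^2 = (v θ)^2 := sq_abs _
    have habs' : |v' θ|^2 = (v' θ)^2 := sq_abs _
    rw [Real.norm_eq_abs, hH'def]
    have h1 : |k * (2 * v θ * v' θ * Real.cos θ - (v θ)^2 * Real.sin θ)|
        ≤ k * (|2 * v θ * v' θ * Real.cos θ| + |(v θ)^2 * Real.sin θ|) := by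
      rw [abs_mul, abs_of_pos hk]
      exact mul_le_mul_of_nonneg_left (abs_sub _ _) hk.le
    refine h1.trans ?_
    have h2 : |2 * v θ * v' θ * Real.cos θ| ≤ 2 * |v θ| * |v' θ| := by
      rw [abs_mul, abs_mul, abs_mul, abs_two]
      nlinarith [abs_nonneg (v θ), abs_nonneg (v' θ), abs_nonneg (Real.cos θ),
        mul_nonneg (abs_nonneg (v θ)) (abs_nonneg (v' θ))]
    have h3 : |(v θ)^2 * Real.sin θ| = (v θ)^2 * Real.sin θ := by
      rw [abs_of_nonneg (by positivity)]
    have h4 : 2 * |v θ| * |v' θ| ≤ (v θ)^2 / Real.sin θ + (v' θ)^2 * Real.sin θ := by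
      rw [← habs, ← habs']; exact hy
    have := mul_le_mul_of_nonneg_left (add_le_add (h2.trans h4) h3.le) hk.le
    refine this.trans (le_of_eq ?_)
    simp only [Pi.add_apply]
  -- the key pointwise identity on Ioo
  have hIdent : ∀ θ ∈ Ioo (0:ℝ) π,
      ((v' θ)^2 + (k^2 / (Real.sin θ)^2) * (v θ)^2) * Real.sin θ
        - (k^2 + k) * ((v θ)^2 * Real.sin θ) = G θ + H' θ := by
    intro θ hθ
    have hs := (hsin_pos θ hθ).ne'
    have hpy : Real.sin θ ^ 2 = 1 - Real.cos θ ^ 2 := Real.sin_sq θ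
    rw [hGdef, hH'def]
    field_simp
    linear_combination (-k^2 * v θ^2) * hpy
  have hmeas : MeasurableSet (Ioo (0:ℝ) π) := measurableSet_Ioo
  have hFi : IntegrableOn (fun θ =>
      ((v' θ)^2 + (k^2 / (Real.sin θ)^2) * (v θ)^2) * Real.sin θ
      - (k^2+k) * ((v θ)^2 * Real.sin θ)) (Ioo 0 π) := hint.sub (hv2s.const_mul _)
  have hGi : IntegrableOn G (Ioo 0 π) := by
    have hdiff : IntegrableOn (fun θ =>
        (((v' θ)^2 + (k^2 / (Real.sin θ)^2) * (v θ)^2) * Real.sin θ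
          - (k^2+k) * ((v θ)^2 * Real.sin θ)) - H' θ) (Ioo 0 π) := hFi.sub hH'i
    refine hdiff.congr_fun (fun θ hθ => ?_) hmeas
    have := hIdent θ hθ
    linarith
  have hsplit1 : ∫ θ in Ioo (0:ℝ) π,
      (((v' θ)^2 + (k^2 / (Real.sin θ)^2) * (v θ)^2) * Real.sin θ
        - (k^2+k) * ((v θ)^2 * Real.sin θ))
      = (∫ θ in Ioo (0:ℝ) π, G θ) + ∫ θ in Ioo (0:ℝ) π, H' θ := by
    rw [setIntegral_congr_fun hmeas (fun θ hθ => hIdent θ hθ)]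
    exact integral_add hGi hH'i
  have hsplit2 : ∫ θ in Ioo (0:ℝ) π,
      (((v' θ)^2 + (k^2 / (Real.sin θ)^2) * (v θ)^2) * Real.sin θ
        - (k^2+k) * ((v θ)^2 * Real.sin θ))
      = (∫ θ in Ioo (0:ℝ) π, ((v' θ)^2 + (k^2 / (Real.sin θ)^2) * (v θ)^2) * Real.sin θ)
        - (k^2+k) * ∫ θ in Ioo (0:ℝ) π, (v θ)^2 * Real.sin θ := by
    rw [integral_sub hint (hv2s.const_mul _), integral_const_mul]
  have hH'0 : ∫ θ in Ioo (0:ℝ) π, H' θ = 0 := by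
    obtain ⟨La, Lb, hTa, hTb, hI⟩ := ftc_Ioo hπ hHd hH'i
    have hca : Tendsto (fun θ => k * Real.cos θ) (𝓝[>] (0:ℝ)) (𝓝 (k * Real.cos 0)) :=
      ((continuous_const.mul Real.continuous_cos).tendsto 0).mono_left nhdsWithin_le_nhds
    have hcb : Tendsto (fun θ => k * Real.cos θ) (𝓝[<] π) (𝓝 (k * Real.cos π)) :=
      ((continuous_const.mul Real.continuous_cos).tendsto π).mono_left nhdsWithin_le_nhds
    have hva : Tendsto (fun θ => (v θ)^2) (𝓝[>] (0:ℝ)) (𝓝 (La / (k * Real.cos 0))) := by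
      refine Tendsto.congr' ?_ (hTa.div hca (by simp [hk.ne']))
      filter_upwards [Ioo_mem_nhdsGT
        (by linarith [Real.pi_div_two_pos] : (0:ℝ) < π/2)] with θ hθ
      have hcpos : 0 < Real.cos θ :=
        Real.cos_pos_of_mem_Ioo ⟨by linarith [Real.pi_div_two_pos, hθ.1], hθ.2⟩
      simp only [hHdef, Pi.div_apply]
      field_simp
    have hvb : Tendsto (fun θ => (v θ)^2) (𝓝[<] π) (𝓝 (Lb / (k * Real.cos π))) := by
      refine Tendsto.congr' ?_ (hTb.div hcb (by simp [hk.ne', Real.cos_pi]))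
      filter_upwards [Ioo_mem_nhdsLT
        (by linarith [Real.pi_div_two_pos] : π/2 < π)] with θ hθ
      have hcneg : Real.cos θ < 0 := Real.cos_neg_of_pi_div_two_lt_of_lt hθ.1
        (by linarith [hθ.2, Real.pi_pos])
      simp only [hHdef, Pi.div_apply]
      field_simp [hcneg.ne, hk.ne']
    have hLa : La / (k * Real.cos 0) = 0 := aux_left hvdiv hva
    have hLb : Lb / (k * Real.cos π) = 0 := aux_right hvdiv hvb
    rw [Real.cos_zero] at hLa
    rw [Real.cos_pi] at hLb
    have hLa0 : La = 0 := by
      field_simp [hk.ne'] at hLa; simpa using hLa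
    have hLb0 : Lb = 0 := by
      have hne : k * (-1:ℝ) ≠ 0 := by simp [hk.ne']
      exact by simpa [hne] using (div_eq_zero_iff.1 hLb).resolve_right hne
    rw [hI, hLa0, hLb0, sub_zero]
  have hGnn : 0 ≤ ∫ θ in Ioo (0:ℝ) π, G θ := by
    refine setIntegral_nonneg hmeas (fun θ hθ => ?_)
    exact mul_nonneg (sq_nonneg _) (hsin_pos θ hθ).le
  have hkey : (∫ θ in Ioo (0:ℝ) π, ((v' θ)^2 + (k^2 / (Real.sin θ)^2) * (v θ)^2) * Real.sin θ)
      - (k^2+k) * ∫ θ in Ioo (0:ℝ) π, (v θ)^2 * Real.sin θ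
      = ∫ θ in Ioo (0:ℝ) π, G θ := by
    rw [← hsplit2, hsplit1, hH'0, add_zero]
  refine ⟨by linarith, ?_, ?_⟩
  · -- equality implies v = C sin^k
    intro heq
    have hG0 : ∫ θ in Ioo (0:ℝ) π, G θ = 0 := by linarith
    have hnn : 0 ≤ᵐ[volume.restrict (Ioo 0 π)] G := by
      filter_upwards [ae_restrict_mem hmeas] with θ hθ
      exact mul_nonneg (sq_nonneg _) (hsin_pos θ hθ).le
    have haeG : G =ᵐ[volume.restrict (Ioo 0 π)] 0 :=
      (integral_eq_zero_iff_of_nonneg_ae hnn hGi).1 hG0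
    set W' : ℝ → ℝ := fun θ =>
      (v' θ - k * (Real.cos θ / Real.sin θ) * v θ) * Real.sin θ ^ (-k) with hW'def
    have haeW : ∀ᵐ θ, θ ∈ Ioo (0:ℝ) π → W' θ = 0 := by
      have h1 : ∀ᵐ θ, θ ∈ Ioo (0:ℝ) π → G θ = 0 :=
        (ae_restrict_iff' hmeas).1 haeG
      filter_upwards [h1] with θ h hθ
      have hs := hsin_pos θ hθ
      have h2 : (v' θ - k * (Real.cos θ / Real.sin θ) * v θ)^2 * Real.sin θ = 0 := h hθ
      have h3 : v' θ - k * (Real.cos θ / Real.sin θ) * v θ = 0 := by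
        have := mul_eq_zero.1 h2
        rcases this with h4 | h4
        · exact pow_eq_zero_iff (by norm_num) |>.1 h4
        · exact absurd h4 hs.ne'
      rw [hW'def]
      simp [h3]
    set w : ℝ → ℝ := fun θ => v θ * Real.sin θ ^ (-k) with hwdef
    have hwd : ∀ θ ∈ Ioo (0:ℝ) π, HasDerivAt w (W' θ) θ := by
      intro θ hθ
      have hs := hsin_pos θ hθ
      have hpow : HasDerivAt (fun y => Real.sin y ^ (-k))
          (Real.cos θ * (-k) * Real.sin θ ^ (-k - 1)) θ :=
        (Real.hasDerivAt_sin θ).rpow_const (Or.inl hs.ne')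
      have h2 := (hderiv θ hθ).mul hpow
      apply h2.congr_deriv
      rw [hW'def, Real.rpow_sub_one hs.ne']
      field_simp
      ring
    have hwconst : ∀ x ∈ Ioo (0:ℝ) π, ∀ y ∈ Ioo (0:ℝ) π, x ≤ y → w y = w x := by
      intro x hx y hy hxy
      have hsub : uIcc x y ⊆ Ioo 0 π := Set.OrdConnected.uIcc_subset Set.ordConnected_Ioo hx hy
      have hInt : IntervalIntegrable W' volume x y := by
        rw [intervalIntegrable_iff]
        refine (integrable_zero _ _ _).congr ?_
        filter_upwards [ae_restrict_mem measurableSet_uIoc, ae_restrict_of_ae haeW]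
          with θ h1 h2
        exact (h2 (hsub (uIoc_subset_uIcc h1))).symm
      have heq2 : ∫ t in x..y, W' t = w y - w x :=
        intervalIntegral.integral_eq_sub_of_hasDerivAt (fun t ht => hwd t (hsub ht)) hInt
      have hzero : ∫ t in x..y, W' t = 0 := by
        have : ∫ t in x..y, W' t = ∫ t in x..y, (0:ℝ) := by
          apply intervalIntegral.integral_congr_ae
          filter_upwards [haeW] with θ h hmem
          exact h (hsub (uIoc_subset_uIcc hmem))
        simpa using this
      linarith [heq2, hzero]
    have hmid : (π/2) ∈ Ioo (0:ℝ) π := ⟨by linarith [Real.pi_div_two_pos], by linarith⟩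
    refine ⟨w (π/2), fun θ hθ => ?_⟩
    have hs := hsin_pos θ hθ
    have hwθ : w θ = w (π/2) := by
      rcases le_total θ (π/2) with h | h
      · exact (hwconst θ hθ (π/2) hmid h).symm ▸ rfl
      · exact hwconst (π/2) hmid θ hθ h
    have : v θ = w θ * Real.sin θ ^ k := by
      rw [hwdef]
      rw [mul_assoc, ← Real.rpow_add hs, neg_add_cancel, Real.rpow_zero, mul_one]
    rw [this, hwθ]
  · -- v = C sin^k implies equality
    rintro ⟨C, hC⟩
    have hG0 : ∀ θ ∈ Ioo (0:ℝ) π, G θ = 0 := by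
      intro θ hθ
      have hs := hsin_pos θ hθ
      have hg : HasDerivAt (fun x => C * Real.sin x ^ k)
          (C * (Real.cos θ * k * Real.sin θ ^ (k - 1))) θ :=
        ((Real.hasDerivAt_sin θ).rpow_const (Or.inl hs.ne')).const_mul C
      have hev : v =ᶠ[nhds θ] (fun x => C * Real.sin x ^ k) := by
        filter_upwards [isOpen_Ioo.mem_nhds hθ] with x hx
        exact hC x hx
      have hv'eq : v' θ = C * (Real.cos θ * k * Real.sin θ ^ (k - 1)) :=
        (hderiv θ hθ).unique (hg.congr_of_eventuallyEq hev)
      have hbr : v' θ - k * (Real.cos θ / Real.sin θ) * v θ = 0 := by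
        rw [hv'eq, hC θ hθ, Real.rpow_sub_one hs.ne']
        field_simp
        ring
      rw [hGdef]
      simp only
      rw [hbr]
      simp
    have : ∫ θ in Ioo (0:ℝ) π, G θ = 0 := by
      rw [setIntegral_congr_fun hmeas (fun θ hθ => hG0 θ hθ)]
      simp
    linarith
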